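/- Let I, J ⊆ ℝ be open intervals, D = I × J, f : I → ℝ, g : J → ℝ smooth with f + g nowhere zero, H = 1/(f + g), and let ω, Q, R : D → ℝ be smooth satisfying the Gauss equation (G₀) and the Codazzi equations (C₀) with mean curvature H. Fix τ ∈ ℝ, τ ≠ 0, with 1 ± 2τ f(u) ≠ 0 and 1 ± 2τ g(v) ≠ 0 on D, and set λ₊ = (1 − 2τg)/(1 + 2τf), λ₋ = (1 + 2τg)/(1 − 2τf). Let Φ⁺, Φ⁻ : D → SL₂(ℝ) be smooth with ∂_u Φ^± = Φ^± U_{λ_±}, ∂_v Φ^± = Φ^± V_{λ_±}, where U_λ = [[−ω_u/4, −Q e^{−ω/2}], [(H/2) λ e^{ω/2}, ω_u/4]] and V_λ = [[ω_v/4, −(H/2) λ^{−1} e^{ω/2}], [R e^{−ω/2}, −ω_v/4]]. Define F = Φ⁺ (Φ⁻)^{−1} and N = −Φ⁺ k′ (Φ⁻)^{−1} with k′ = diag(−1,1). Then, with the scalar product ⟨X,Y⟩ = (1/2)(tr(XY) − tr(X)tr(Y)) on 2×2 real matrices: ⟨F,F⟩ = −1; ⟨∂_u F, ∂_u F⟩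 = ⟨∂_v F, ∂_v F⟩ = 0; 2⟨∂_u F, ∂_v F⟩ = 4τ² e^ω/((1 − 4τ²f²)(1 − 4τ²g²)); ⟨N,N⟩ = 1; and ⟨N, F⟩ = ⟨N, ∂_u F⟩ = ⟨N, ∂_v F⟩ = 0. -/

import Mathlib

open Matrix

noncomputable section

/-- Partial derivative in the first variable. -/
def pd1 (f : ℝ → ℝ → ℝ) (u v : ℝ) : ℝ := deriv (fun x => f x v) u

/-- Partial derivative in the second variable. -/
def pd2 (f : ℝ → ℝ → ℝ) (u v : ℝ) : ℝ := deriv (fun y => f u y) v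

/-- The Gauss equation (G_c) at a point. -/
def GaussEq (c : ℝ) (ω Q R H : ℝ → ℝ → ℝ) (u v : ℝ) : Prop :=
  pd2 (pd1 ω) u v + (1 / 2) * ((H u v) ^ 2 + c) * Real.exp (ω u v)
    - 2 * Q u v * R u v * Real.exp (-ω u v) = 0

/-- The Codazzi equations (C_c) at a point. -/
def CodazziEq (ω Q R H : ℝ → ℝ → ℝ) (u v : ℝ) : Prop :=
  pd1 H u v = 2 * Real.exp (-ω u v) * pd2 Q u v ∧
  pd2 H u v = 2 * Real.exp (-ω u v) * pd1 R u v

/-- Smoothness of a two-variable function on a set. -/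
def Smooth2 (f : ℝ → ℝ → ℝ) (s : Set (ℝ × ℝ)) : Prop :=
  ContDiffOn ℝ (⊤ : ℕ∞) (fun p : ℝ × ℝ => f p.1 p.2) s

/-- Entrywise derivative of a matrix-valued function of a real variable. -/
def mderiv (f : ℝ → Matrix (Fin 2) (Fin 2) ℝ) (x : ℝ) : Matrix (Fin 2) (Fin 2) ℝ :=
  Matrix.of fun i j => deriv (fun t => f t i j) x

/-- The matrix `U_λ` of the Lax pair with variable spectral parameter. -/
def Umat (ω Q H lam : ℝ → ℝ → ℝ) (u v : ℝ) : Matrix (Fin 2) (Fin 2) ℝ :=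
  !![-(pd1 ω u v) / 4, -(Q u v) * Real.exp (-(ω u v) / 2);
     (H u v / 2) * lam u v * Real.exp (ω u v / 2), (pd1 ω u v) / 4]

/-- The matrix `V_λ` of the Lax pair with variable spectral parameter. -/
def Vmat (ω R H lam : ℝ → ℝ → ℝ) (u v : ℝ) : Matrix (Fin 2) (Fin 2) ℝ :=
  !![(pd2 ω u v) / 4, -(H u v / 2) * (lam u v)⁻¹ * Real.exp (ω u v / 2);
     R u v * Real.exp (-(ω u v) / 2), -(pd2 ω u v) / 4]

/-- The matrix `k′ = diag(−1, 1)`. -/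
def kmat : Matrix (Fin 2) (Fin 2) ℝ := !![-1, 0; 0, 1]

/-- The scalar product `⟨X,Y⟩ = (1/2)(tr(XY) − tr(X)tr(Y))` (the metric of `E⁴₂ = M₂ℝ`). -/
def form2 (X Y : Matrix (Fin 2) (Fin 2) ℝ) : ℝ :=
  (1 / 2) * ((X * Y).trace - X.trace * Y.trace)

-- AUXILIARY LEMMAS --

private lemma form2_eq_det (X Y : Matrix (Fin 2) (Fin 2) ℝ) :
    form2 X Y = ((X.det + Y.det) - (X + Y).det) / 2 := by
  simp [form2, Matrix.det_fin_two, Matrix.trace_fin_two, Matrix.mul_apply, Fin.sum_univ_two,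
    Matrix.add_apply]
  ring

private lemma form2_conj (C D X Y : Matrix (Fin 2) (Fin 2) ℝ)
    (hC : C.det = 1) (hD : D.det = 1) :
    form2 (C * X * D) (C * Y * D) = form2 X Y := by
  have h : C * X * D + C * Y * D = C * (X + Y) * D := by noncomm_ring
  rw [form2_eq_det, form2_eq_det, h]
  simp [Matrix.det_mul, hC, hD]

private lemma hasDerivAt_slice1 {φ : ℝ → ℝ → ℝ} {s : Set (ℝ × ℝ)} (hs : IsOpen s)
    {u v : ℝ} (hm : (u, v) ∈ s) (hφ : ContDiffOn ℝ (⊤ : ℕ∞) (fun p : ℝ × ℝ => φ p.1 p.2) s) :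
    HasDerivAt (fun x => φ x v) (deriv (fun x => φ x v) u) u := by
  have h1 : DifferentiableAt ℝ (fun p : ℝ × ℝ => φ p.1 p.2) (u, v) :=
    (hφ.contDiffAt (hs.mem_nhds hm)).differentiableAt (by simp)
  have h2 : DifferentiableAt ℝ (fun x => φ x v) u :=
    h1.comp (f := fun x : ℝ => (x, v)) u (differentiableAt_id.prodMk (differentiableAt_const v))
  exact h2.hasDerivAt

private lemma hasDerivAt_slice2 {φ : ℝ → ℝ → ℝ} {s : Set (ℝ × ℝ)} (hs : IsOpen s)
    {u v : ℝ} (hm : (u, v) ∈ s) (hφ : ContDiffOn ℝ (⊤ : ℕ∞) (fun p : ℝ × ℝ => φ p.1 p.2) s) :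
    HasDerivAt (fun y => φ u y) (deriv (fun y => φ u y) v) v := by
  have h1 : DifferentiableAt ℝ (fun p : ℝ × ℝ => φ p.1 p.2) (u, v) :=
    (hφ.contDiffAt (hs.mem_nhds hm)).differentiableAt (by simp)
  have h2 : DifferentiableAt ℝ (fun y => φ u y) v :=
    h1.comp v ((differentiableAt_const u).prodMk differentiableAt_id)
  exact h2.hasDerivAt

/-- derivative of the adjugate (2×2, entrywise linear). -/
private lemma hasDerivAt_adjugate {Φ : ℝ → Matrix (Fin 2) (Fin 2) ℝ}
    {M' : Matrix (Fin 2) (Fin 2) ℝ} {u : ℝ}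
    (hMd : ∀ i j, HasDerivAt (fun x => Φ x i j) (M' i j) u) :
    ∀ k l, HasDerivAt (fun x => (Φ x).adjugate k l) (M'.adjugate k l) u := by
  intro k l
  fin_cases k <;> fin_cases l <;>
    simp only [Matrix.adjugate_fin_two, Matrix.cons_val', Matrix.cons_val_zero,
      Matrix.cons_val_one, Matrix.head_cons, Matrix.empty_val', Matrix.cons_val_fin_one,
      Matrix.head_fin_const, Fin.isValue] <;>
    first
      | exact hMd _ _
      | exact (hMd _ _).neg

/-- derivative of `x ↦ Φp x * (Φm x).adjugate`, entrywise. -/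
private lemma hasDerivAt_mul_adj {Φp Φm : ℝ → Matrix (Fin 2) (Fin 2) ℝ}
    {P' M' : Matrix (Fin 2) (Fin 2) ℝ} {u : ℝ}
    (hPd : ∀ i j, HasDerivAt (fun x => Φp x i j) (P' i j) u)
    (hMd : ∀ i j, HasDerivAt (fun x => Φm x i j) (M' i j) u) :
    ∀ i j, HasDerivAt (fun x => (Φp x * (Φm x).adjugate) i j)
      ((P' * (Φm u).adjugate + Φp u * M'.adjugate) i j) u := by
  have hadj := hasDerivAt_adjugate hMd
  intro i j
  have h := ((hPd i 0).mul (hadj 0 j)).add ((hPd i 1).mul (hadj 1 j))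
  refine (h.congr_of_eventuallyEq (Filter.EventuallyEq.of_eq ?_)).congr_deriv ?_
  · funext x
    simp [Matrix.mul_apply, Fin.sum_univ_two]
  · simp only [Matrix.mul_apply, Matrix.add_apply, Fin.sum_univ_two]
    ring


set_option maxHeartbeats 2000000

/-- immersion formula in the anti de Sitter space `H³₁`:
for solutions `Φ⁺, Φ⁻` of the Lax pairs with spectral parameters
`λ₊ = (1−2τg)/(1+2τf)`, `λ₋ = (1+2τg)/(1−2τf)`, the map `F = Φ⁺(Φ⁻)⁻¹` takes values in
`H³₁ = {⟨X,X⟩ = −1}`, is conformal with `2⟨F_u,F_v⟩ = 4τ²e^ω/((1−4τ²f²)(1−4τ²g²))`,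
and `N = −Φ⁺k′(Φ⁻)⁻¹` is a unit normal. -/
theorem statement3
    (I J : Set ℝ)
    (hIopen : IsOpen I) (hIint : I.OrdConnected)
    (hJopen : IsOpen J) (hJint : J.OrdConnected)
    (f g : ℝ → ℝ)
    (hf : ContDiffOn ℝ (⊤ : ℕ∞) f I) (hg : ContDiffOn ℝ (⊤ : ℕ∞) g J)
    (hfg : ∀ u ∈ I, ∀ v ∈ J, f u + g v ≠ 0)
    (τ : ℝ) (hτ : τ ≠ 0)
    (hτf₁ : ∀ u ∈ I, 1 + 2 * τ * f u ≠ 0) (hτf₂ : ∀ u ∈ I, 1 - 2 * τ * f u ≠ 0)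
    (hτg₁ : ∀ v ∈ J, 1 + 2 * τ * g v ≠ 0) (hτg₂ : ∀ v ∈ J, 1 - 2 * τ * g v ≠ 0)
    (H lamp lamm : ℝ → ℝ → ℝ)
    (hH : ∀ u v, H u v = 1 / (f u + g v))
    (hlamp : ∀ u v, lamp u v = (1 - 2 * τ * g v) / (1 + 2 * τ * f u))
    (hlamm : ∀ u v, lamm u v = (1 + 2 * τ * g v) / (1 - 2 * τ * f u))
    (ω Q R : ℝ → ℝ → ℝ)
    (hω : Smooth2 ω (I ×ˢ J)) (hQ : Smooth2 Q (I ×ˢ J)) (hR : Smooth2 R (I ×ˢ J))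
    (hGauss : ∀ u ∈ I, ∀ v ∈ J, GaussEq 0 ω Q R H u v)
    (hCodazzi : ∀ u ∈ I, ∀ v ∈ J, CodazziEq ω Q R H u v)
    (Φp Φm : ℝ → ℝ → Matrix (Fin 2) (Fin 2) ℝ)
    (hΦpsmooth : ∀ i j, ContDiffOn ℝ (⊤ : ℕ∞) (fun p : ℝ × ℝ => Φp p.1 p.2 i j) (I ×ˢ J))
    (hΦmsmooth : ∀ i j, ContDiffOn ℝ (⊤ : ℕ∞) (fun p : ℝ × ℝ => Φm p.1 p.2 i j) (I ×ˢ J))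
    (hΦpdet : ∀ u ∈ I, ∀ v ∈ J, (Φp u v).det = 1)
    (hΦmdet : ∀ u ∈ I, ∀ v ∈ J, (Φm u v).det = 1)
    (hLaxUp : ∀ u ∈ I, ∀ v ∈ J,
      mderiv (fun x => Φp x v) u = Φp u v * Umat ω Q H lamp u v)
    (hLaxVp : ∀ u ∈ I, ∀ v ∈ J,
      mderiv (fun y => Φp u y) v = Φp u v * Vmat ω R H lamp u v)
    (hLaxUm : ∀ u ∈ I, ∀ v ∈ J,
      mderiv (fun x => Φm x v) u = Φm u v * Umat ω Q H lamm u v)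
    (hLaxVm : ∀ u ∈ I, ∀ v ∈ J,
      mderiv (fun y => Φm u y) v = Φm u v * Vmat ω R H lamm u v)
    (F N : ℝ → ℝ → Matrix (Fin 2) (Fin 2) ℝ)
    (hF : ∀ u v, F u v = Φp u v * (Φm u v)⁻¹)
    (hN : ∀ u v, N u v = -(Φp u v * kmat * (Φm u v)⁻¹)) :
    ∀ u ∈ I, ∀ v ∈ J,
      form2 (F u v) (F u v) = -1 ∧
      form2 (mderiv (fun x => F x v) u) (mderiv (fun x => F x v) u) = 0 ∧
      form2 (mderiv (fun y => F u y) v) (mderiv (fun y => F u y) v) = 0 ∧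
      2 * form2 (mderiv (fun x => F x v) u) (mderiv (fun y => F u y) v)
        = 4 * τ ^ 2 * Real.exp (ω u v) /
            ((1 - 4 * τ ^ 2 * (f u) ^ 2) * (1 - 4 * τ ^ 2 * (g v) ^ 2)) ∧
      form2 (N u v) (N u v) = 1 ∧
      form2 (N u v) (F u v) = 0 ∧
      form2 (N u v) (mderiv (fun x => F x v) u) = 0 ∧
      form2 (N u v) (mderiv (fun y => F u y) v) = 0 := by
  intro u hu v hv
  have huv : (u, v) ∈ I ×ˢ J := Set.mk_mem_prod hu hv
  have hopen : IsOpen (I ×ˢ J) := hIopen.prod hJopen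
  have hdetM : (Φm u v).det = 1 := hΦmdet u hu v hv
  have hdetP : (Φp u v).det = 1 := hΦpdet u hu v hv
  have hdetAdj : ((Φm u v).adjugate).det = 1 := by
    rw [Matrix.det_adjugate, hdetM]; norm_num
  have hMinvu : (Φm u v)⁻¹ = (Φm u v).adjugate := by
    rw [Matrix.inv_def, hdetM, Ring.inverse_one, one_smul]
  -- entrywise derivatives of Φp, Φm in the first variable
  have hPd : ∀ i j, HasDerivAt (fun x => Φp x v i j)
      ((Φp u v * Umat ω Q H lamp u v) i j) u := by
    intro i j
    have h := hasDerivAt_slice1 (φ := fun a b => Φp a b i j) hopen huv (hΦpsmooth i j)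
    have e : (Φp u v * Umat ω Q H lamp u v) i j = deriv (fun x => Φp x v i j) u :=
      (congrFun (congrFun (hLaxUp u hu v hv) i) j).symm
    rwa [← e] at h
  have hMd : ∀ i j, HasDerivAt (fun x => Φm x v i j)
      ((Φm u v * Umat ω Q H lamm u v) i j) u := by
    intro i j
    have h := hasDerivAt_slice1 (φ := fun a b => Φm a b i j) hopen huv (hΦmsmooth i j)
    have e : (Φm u v * Umat ω Q H lamm u v) i j = deriv (fun x => Φm x v i j) u :=
      (congrFun (congrFun (hLaxUm u hu v hv) i) j).symm
    rwa [← e] at h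
  -- entrywise derivatives in the second variable
  have hPd2 : ∀ i j, HasDerivAt (fun y => Φp u y i j)
      ((Φp u v * Vmat ω R H lamp u v) i j) v := by
    intro i j
    have h := hasDerivAt_slice2 (φ := fun a b => Φp a b i j) hopen huv (hΦpsmooth i j)
    have e : (Φp u v * Vmat ω R H lamp u v) i j = deriv (fun y => Φp u y i j) v :=
      (congrFun (congrFun (hLaxVp u hu v hv) i) j).symm
    rwa [← e] at h
  have hMd2 : ∀ i j, HasDerivAt (fun y => Φm u y i j)
      ((Φm u v * Vmat ω R H lamm u v) i j) v := by
    intro i j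
    have h := hasDerivAt_slice2 (φ := fun a b => Φm a b i j) hopen huv (hΦmsmooth i j)
    have e : (Φm u v * Vmat ω R H lamm u v) i j = deriv (fun y => Φm u y i j) v :=
      (congrFun (congrFun (hLaxVm u hu v hv) i) j).symm
    rwa [← e] at h
  -- the matrices U, V are traceless, so their adjugates are their negatives
  have hUadj : (Umat ω Q H lamm u v).adjugate = -(Umat ω Q H lamm u v) := by
    rw [Matrix.adjugate_fin_two]
    ext i j
    fin_cases i <;> fin_cases j <;> simp [Umat] <;> ring
  have hVadj : (Vmat ω R H lamm u v).adjugate = -(Vmat ω R H lamm u v) := by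
    rw [Matrix.adjugate_fin_two]
    ext i j
    fin_cases i <;> fin_cases j <;> simp [Vmat] <;> ring
  -- the derivative of F in the first variable
  have hFu : mderiv (fun x => F x v) u
      = Φp u v * (Umat ω Q H lamp u v - Umat ω Q H lamm u v) * (Φm u v).adjugate := by
    have hG := hasDerivAt_mul_adj (Φp := fun x => Φp x v) (Φm := fun x => Φm x v) hPd hMd
    have hFG : ∀ i j, HasDerivAt (fun x => F x v i j)
        ((Φp u v * Umat ω Q H lamp u v * (Φm u v).adjugate
          + Φp u v * (Φm u v * Umat ω Q H lamm u v).adjugate) i j) u := by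
      intro i j
      refine (hG i j).congr_of_eventuallyEq ?_
      filter_upwards [hIopen.mem_nhds hu] with x hx
      rw [hF, Matrix.inv_def, hΦmdet x hx v hv, Ring.inverse_one, one_smul]
    have hid : Φp u v * Umat ω Q H lamp u v * (Φm u v).adjugate
        + Φp u v * (Φm u v * Umat ω Q H lamm u v).adjugate
        = Φp u v * (Umat ω Q H lamp u v - Umat ω Q H lamm u v) * (Φm u v).adjugate := by
      rw [Matrix.adjugate_mul_distrib, hUadj]
      noncomm_ring
    ext i j
    rw [← hid]
    exact (hFG i j).deriv
  -- the derivative of F in the second variable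
  have hFv : mderiv (fun y => F u y) v
      = Φp u v * (Vmat ω R H lamp u v - Vmat ω R H lamm u v) * (Φm u v).adjugate := by
    have hG := hasDerivAt_mul_adj (Φp := fun y => Φp u y) (Φm := fun y => Φm u y) hPd2 hMd2
    have hFG : ∀ i j, HasDerivAt (fun y => F u y i j)
        ((Φp u v * Vmat ω R H lamp u v * (Φm u v).adjugate
          + Φp u v * (Φm u v * Vmat ω R H lamm u v).adjugate) i j) v := by
      intro i j
      refine (hG i j).congr_of_eventuallyEq ?_
      filter_upwards [hJopen.mem_nhds hv] with y hy
      rw [hF, Matrix.inv_def, hΦmdet u hu y hy, Ring.inverse_one, one_smul]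
    have hid : Φp u v * Vmat ω R H lamp u v * (Φm u v).adjugate
        + Φp u v * (Φm u v * Vmat ω R H lamm u v).adjugate
        = Φp u v * (Vmat ω R H lamp u v - Vmat ω R H lamm u v) * (Φm u v).adjugate := by
      rw [Matrix.adjugate_mul_distrib, hVadj]
      noncomm_ring
    ext i j
    rw [← hid]
    exact (hFG i j).deriv
  -- explicit forms of the differences
  have hA : Umat ω Q H lamp u v - Umat ω Q H lamm u v
      = !![0, 0; (H u v / 2) * (lamp u v - lamm u v) * Real.exp (ω u v / 2), 0] := by
    ext i j
    fin_cases i <;> fin_cases j <;> simp [Umat, Matrix.sub_apply] <;> ring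
  have hB : Vmat ω R H lamp u v - Vmat ω R H lamm u v
      = !![0, -(H u v / 2) * ((lamp u v)⁻¹ - (lamm u v)⁻¹) * Real.exp (ω u v / 2); 0, 0] := by
    ext i j
    fin_cases i <;> fin_cases j <;> simp [Vmat, Matrix.sub_apply] <;> ring
  -- values of F and N at the point
  have hFpt : F u v = Φp u v * 1 * (Φm u v).adjugate := by
    rw [hF, hMinvu, mul_one]
  have hNpt : N u v = Φp u v * (-kmat) * (Φm u v).adjugate := by
    rw [hN, hMinvu]; noncomm_ring
  refine ⟨?_, ?_, ?_, ?_, ?_, ?_, ?_, ?_⟩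
  · rw [hFpt, form2_conj _ _ _ _ hdetP hdetAdj, form2_eq_det]
    simp [Matrix.det_fin_two, Matrix.add_apply, Matrix.one_apply]
    norm_num
  · rw [hFu, form2_conj _ _ _ _ hdetP hdetAdj, form2_eq_det, hA]
    simp [Matrix.det_fin_two, Matrix.add_apply]
  · rw [hFv, form2_conj _ _ _ _ hdetP hdetAdj, form2_eq_det, hB]
    simp [Matrix.det_fin_two, Matrix.add_apply]
  · rw [hFu, hFv, form2_conj _ _ _ _ hdetP hdetAdj, form2_eq_det, hA, hB]
    simp only [Matrix.det_fin_two, Matrix.add_apply, Matrix.of_apply, Matrix.cons_val', Matrix.cons_val_zero,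
      Matrix.cons_val_one, Matrix.head_cons, Matrix.empty_val', Matrix.cons_val_fin_one,
      Matrix.head_fin_const]
    rw [hH, hlamp, hlamm, inv_div, inv_div]
    have e1 : (1 : ℝ) - 4 * τ ^ 2 * (f u) ^ 2 = (1 - 2 * τ * f u) * (1 + 2 * τ * f u) := by ring
    have e2 : (1 : ℝ) - 4 * τ ^ 2 * (g v) ^ 2 = (1 - 2 * τ * g v) * (1 + 2 * τ * g v) := by ring
    have hexp : Real.exp (ω u v) = Real.exp (ω u v / 2) * Real.exp (ω u v / 2) := by
      rw [← Real.exp_add]; norm_num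
    rw [e1, e2, hexp]
    have h1 := hτf₁ u hu
    have h2 := hτf₂ u hu
    have h3 := hτg₁ v hv
    have h4 := hτg₂ v hv
    have h5 := hfg u hu v hv
    rw [div_sub_div _ _ h1 h2, div_sub_div _ _ h4 h3]
    field_simp
    ring_nf
    field_simp
    ring
  · rw [hNpt, form2_conj _ _ _ _ hdetP hdetAdj, form2_eq_det]
    simp [kmat, Matrix.det_fin_two, Matrix.add_apply, Matrix.neg_apply]
    norm_num
  · rw [hNpt, hFpt, form2_conj _ _ _ _ hdetP hdetAdj, form2_eq_det]
    simp [kmat, Matrix.det_fin_two, Matrix.add_apply, Matrix.neg_apply, Matrix.one_apply]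
  · rw [hNpt, hFu, form2_conj _ _ _ _ hdetP hdetAdj, form2_eq_det, hA]
    simp [kmat, Matrix.det_fin_two, Matrix.add_apply, Matrix.neg_apply]
  · rw [hNpt, hFv, form2_conj _ _ _ _ hdetP hdetAdj, form2_eq_det, hB]
    simp [kmat, Matrix.det_fin_two, Matrix.add_apply, Matrix.neg_apply]
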